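/- Let 𝔤 be the 2-dimensional real Lie algebra with basis e₁, e₂ and bracket [e₁, e₂] = 2e₂. A linear map B: 𝔤 → 𝔤 with matrix (b₁₁ b₁₂; b₂₁ b₂₂) in the basis (e₁, e₂) is a Rota-Baxter operator of weight 1 if and only if B has one of the three forms: (λ 0; μ 0), (λ 0; μ −1), or (−m−1 k; (−m²−m)/k m) with k ≠ 0, for some real parameters λ, μ, m, k. -/
import Mathlib

/-- Classification of Rota-Baxter operators of weight 1 on the 2-dimensional
non-abelian real Lie algebra with basis `e₁ = (1,0)`, `e₂ = (0,1)` and bracket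
`[e₁, e₂] = 2e₂`.  A linear map with matrix `(b₁₁ b₁₂; b₂₁ b₂₂)` is a
Rota-Baxter operator iff it has one of the three forms
`(λ 0; μ 0)`, `(λ 0; μ −1)`, or `(−m−1 k; (−m²−m)/k m)` with `k ≠ 0`
(here `λ = b₁₁`, `μ = b₂₁`, `k = b₁₂`, `m = b₂₂`). -/
theorem rota_baxter_two_dim_classification
    (b11 b12 b21 b22 : ℝ)
    (br : ℝ × ℝ → ℝ × ℝ → ℝ × ℝ)
    (hbr : ∀ x y : ℝ × ℝ, br x y = (0, 2 * (x.1 * y.2 - x.2 * y.1)))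
    (B : ℝ × ℝ → ℝ × ℝ)
    (hB : ∀ x : ℝ × ℝ, B x = (b11 * x.1 + b12 * x.2, b21 * x.1 + b22 * x.2)) :
    (∀ x y : ℝ × ℝ, br (B x) (B y) = B (br (B x) y + br x (B y) + br x y)) ↔
      ((b12 = 0 ∧ b22 = 0) ∨ (b12 = 0 ∧ b22 = -1) ∨
        (b12 ≠ 0 ∧ b11 = -b22 - 1 ∧ b21 = (-b22 ^ 2 - b22) / b12)) := by
  constructor
  · intro h
    have h1 := h (1, 0) (0, 1)
    simp only [hbr, hB, Prod.mk.injEq, Prod.mk_add_mk, Prod.fst, Prod.snd] at h1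
    obtain ⟨e1, e2⟩ := h1
    by_cases hb12 : b12 = 0
    · subst hb12
      have : b22 = 0 ∨ b22 = -1 := by
        rcases mul_eq_zero.1 (show b22 * (b22 + 1) = 0 by nlinarith [e2]) with h | h
        · left; exact h
        · right; linarith
      rcases this with h | h
      · exact Or.inl ⟨rfl, h⟩
      · exact Or.inr (Or.inl ⟨rfl, h⟩)
    · have hb11 : b11 = -b22 - 1 := by
        have : b12 * (b11 + b22 + 1) = 0 := by nlinarith [e1]
        rcases mul_eq_zero.1 this with h' | h'
        · exact absurd h' hb12
        · linarith
      refine Or.inr (Or.inr ⟨hb12, hb11, ?_⟩)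
      field_simp
      nlinarith [e2, hb11, sq_nonneg b22]
  · intro h x y
    simp only [hbr, hB, Prod.mk.injEq, Prod.mk_add_mk, Prod.fst, Prod.snd]
    have key : b12 * (b11 + b22 + 1) = 0 ∧
        b11 * b22 - b12 * b21 = b22 * (b11 + b22 + 1) := by
      rcases h with ⟨h1, h2⟩ | ⟨h1, h2⟩ | ⟨h1, h2, h3⟩
      · subst h1; subst h2; constructor <;> ring
      · subst h1; subst h2; constructor <;> ring
      · subst h2
        have h3' : b21 * b12 = -b22 ^ 2 - b22 := by
          field_simp at h3; linarith [h3]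
        constructor <;> nlinarith [h3']
    obtain ⟨k1, k2⟩ := key
    constructor
    · linear_combination (-2 * (x.1 * y.2 - x.2 * y.1)) * k1
    · linear_combination (2 * (x.1 * y.2 - x.2 * y.1)) * k2
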